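/- Let (Z, d) be a metric space, N, k ≥ 1 natural numbers, and 𝒰 a collection of open subsets of Z covering Z such that every U ∈ 𝒰 has nonempty complement, every point of Z lies in at most N members of 𝒰, and for every z ∈ Z there exists U ∈ 𝒰 containing the closed ball of radius 4Nk around z. For U ∈ 𝒰 define a_U(z) := inf{ d(z,w) | w ∈ Z ∖ U } and s(z) := ∑_{U ∈ 𝒰} a_U(z) (a finite sum, since a_U(z) = 0 unless z ∈ U). Then s(z) ≥ 4Nk for all z, and for all x, y ∈ Z: ∑_{U ∈ 𝒰} |a_U(x)/s(x) − a_U(y)/s(y)| ≤ d(x,y)/k. -/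

import Mathlib

/-- Let `𝒰` be an open cover of a metric space `Z` such that every `U ∈ 𝒰` has a
nonempty complement, every point lies in at most `N` members of `𝒰`, and every closed
ball of radius `4Nk` is contained in some member. With
`a_U(z) := inf { d(z,w) | w ∉ U }` and `s(z) := ∑_{U ∈ 𝒰} a_U(z)` one has
`s(z) ≥ 4Nk` and `∑_{U ∈ 𝒰} |a_U(x)/s(x) − a_U(y)/s(y)| ≤ d(x,y)/k`. -/
theorem cover_partition_lipschitz {Z : Type*} [MetricSpace Z]
    (N k : ℕ) (hN : 1 ≤ N) (hk : 1 ≤ k) (𝒰 : Set (Set Z))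
    (hopen : ∀ U ∈ 𝒰, IsOpen U)
    (hcover : ∀ z : Z, ∃ U ∈ 𝒰, z ∈ U)
    (hproper : ∀ U ∈ 𝒰, Uᶜ.Nonempty)
    (hdim : ∀ z : Z, {U ∈ 𝒰 | z ∈ U}.encard ≤ (N : ℕ∞))
    (hball : ∀ z : Z, ∃ U ∈ 𝒰, Metric.closedBall z (4 * N * k) ⊆ U) :
    (∀ z : Z, 4 * N * k ≤ ∑' U : 𝒰, Metric.infDist z ((U : Set Z))ᶜ) ∧
    ∀ x y : Z,
      ∑' U : 𝒰,
        |Metric.infDist x ((U : Set Z))ᶜ / (∑' V : 𝒰, Metric.infDist x ((V : Set Z))ᶜ) -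
         Metric.infDist y ((U : Set Z))ᶜ / (∑' V : 𝒰, Metric.infDist y ((V : Set Z))ᶜ)|
        ≤ dist x y / k := by
  classical
  set a : Z → 𝒰 → ℝ := fun z U => Metric.infDist z ((U : Set Z))ᶜ with ha_def
  have ha_nonneg : ∀ z U, 0 ≤ a z U := fun z U => Metric.infDist_nonneg
  have ha_zero : ∀ (z : Z) (U : 𝒰), z ∉ (U : Set Z) → a z U = 0 := fun z U hz =>
    Metric.infDist_zero_of_mem hz
  -- finite supports of size ≤ N
  have hfin : ∀ z : Z, ∃ t : Finset 𝒰, (∀ U ∉ t, a z U = 0) ∧ (t.card : ℝ) ≤ N := by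
    intro z
    have h2 : ({U : 𝒰 | z ∈ (U : Set Z)}).encard ≤ (N : ℕ∞) := by
      have himg : Subtype.val '' {U : 𝒰 | z ∈ (U : Set Z)} = {U ∈ 𝒰 | z ∈ U} := by
        ext V
        constructor
        · rintro ⟨⟨U, hU⟩, hz, rfl⟩; exact ⟨hU, hz⟩
        · rintro ⟨hV, hz⟩; exact ⟨⟨V, hV⟩, hz, rfl⟩
      rw [← Subtype.val_injective.encard_image, himg]
      exact hdim z
    obtain ⟨hfin', hcard⟩ := Set.encard_le_coe_iff_finite_ncard_le.mp h2
    refine ⟨hfin'.toFinset, ?_, ?_⟩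
    · intro U hU
      apply ha_zero
      intro h
      exact hU (hfin'.mem_toFinset.mpr h)
    · rw [← Set.ncard_eq_toFinset_card _ hfin']
      exact_mod_cast hcard
  have hsum : ∀ z : Z, Summable (a z) := by
    intro z
    obtain ⟨t, ht, -⟩ := hfin z
    exact summable_of_ne_finset_zero ht
  -- lower bound on s
  have hs_ge : ∀ z : Z, (4 * N * k : ℝ) ≤ ∑' U, a z U := by
    intro z
    obtain ⟨U, hU, hUb⟩ := hball z
    have hne : (Uᶜ).Nonempty := hproper U hU
    have h1 : (4 * N * k : ℝ) ≤ a z ⟨U, hU⟩ := by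
      by_contra h
      push_neg at h
      obtain ⟨w, hw, hwd⟩ := (Metric.infDist_lt_iff hne).mp h
      exact hw (hUb (Metric.mem_closedBall'.mpr hwd.le))
    exact h1.trans ((hsum z).le_tsum _ fun _ _ => ha_nonneg z _)
  have hNk0 : (0 : ℝ) < 4 * N * k := by
    have h1 : (1 : ℝ) ≤ N := by exact_mod_cast hN
    have h2 : (1 : ℝ) ≤ k := by exact_mod_cast hk
    nlinarith
  have hlip : ∀ (x y : Z) (U : 𝒰), |a x U - a y U| ≤ dist x y := by
    intro x y U
    rw [abs_sub_le_iff]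
    constructor
    · have := Metric.infDist_le_infDist_add_dist (x := x) (y := y) (s := ((U : Set Z))ᶜ)
      linarith
    · have := Metric.infDist_le_infDist_add_dist (x := y) (y := x) (s := ((U : Set Z))ᶜ)
      rw [dist_comm] at this
      linarith
  refine ⟨hs_ge, ?_⟩
  intro x y
  obtain ⟨tx, htx, hcx⟩ := hfin x
  obtain ⟨ty, hty, hcy⟩ := hfin y
  set t : Finset 𝒰 := tx ∪ ty with ht_def
  have htz : ∀ z ∈ ({x, y} : Set Z), True := fun _ _ => trivial
  have hx0 : ∀ U ∉ t, a x U = 0 := fun U hU => htx U (fun h => hU (Finset.mem_union_left _ h))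
  have hy0 : ∀ U ∉ t, a y U = 0 := fun U hU => hty U (fun h => hU (Finset.mem_union_right _ h))
  set sx : ℝ := ∑' U, a x U with hsx_def
  set sy : ℝ := ∑' U, a y U with hsy_def
  have hsx_eq : sx = ∑ U ∈ t, a x U := tsum_eq_sum hx0
  have hsy_eq : sy = ∑ U ∈ t, a y U := tsum_eq_sum hy0
  have hsx4 : (4 * N * k : ℝ) ≤ sx := hs_ge x
  have hsy4 : (4 * N * k : ℝ) ≤ sy := hs_ge y
  have hsx0 : (0 : ℝ) < sx := lt_of_lt_of_le hNk0 hsx4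
  have hsy0 : (0 : ℝ) < sy := lt_of_lt_of_le hNk0 hsy4
  set d : ℝ := dist x y with hd_def
  have hd0 : (0 : ℝ) ≤ d := dist_nonneg
  set c : ℝ := (t.card : ℝ) with hc_def
  have hc : c ≤ 2 * N := by
    have := Finset.card_union_le tx ty
    have : (t.card : ℝ) ≤ (tx.card : ℝ) + (ty.card : ℝ) := by exact_mod_cast this
    linarith
  have hsum_abs : ∑ U ∈ t, |a x U - a y U| ≤ c * d := by
    calc ∑ U ∈ t, |a x U - a y U| ≤ t.card • d :=
          Finset.sum_le_card_nsmul t _ d fun U _ => hlip x y U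
    _ = c * d := by rw [nsmul_eq_mul]
  have hdiff : |sy - sx| ≤ c * d := by
    rw [hsx_eq, hsy_eq, ← Finset.sum_sub_distrib]
    calc |∑ U ∈ t, (a y U - a x U)| ≤ ∑ U ∈ t, |a y U - a x U| := Finset.abs_sum_le_sum_abs _ _
    _ = ∑ U ∈ t, |a x U - a y U| := by
        apply Finset.sum_congr rfl
        intro U _
        rw [abs_sub_comm]
    _ ≤ c * d := hsum_abs
  -- the main tsum equals a finite sum
  have hmain_eq : (∑' U : 𝒰, |a x U / sx - a y U / sy|) =
      ∑ U ∈ t, |a x U / sx - a y U / sy| := by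
    apply tsum_eq_sum
    intro U hU
    rw [hx0 U hU, hy0 U hU]
    simp
  have key : ∀ U : 𝒰, |a x U / sx - a y U / sy| ≤
      |a x U - a y U| / sx + a y U * |sy - sx| / (sx * sy) := by
    intro U
    have heq : a x U / sx - a y U / sy = (a x U - a y U) / sx + a y U * (sy - sx) / (sx * sy) := by
      field_simp
      ring
    rw [heq]
    refine (abs_add_le _ _).trans (le_of_eq ?_)
    rw [abs_div, abs_of_pos hsx0, abs_div, abs_mul, abs_of_nonneg (ha_nonneg y U),
      abs_of_pos (mul_pos hsx0 hsy0)]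
  rw [hmain_eq]
  have step1 : ∑ U ∈ t, |a x U / sx - a y U / sy| ≤
      (∑ U ∈ t, |a x U - a y U|) / sx + (∑ U ∈ t, a y U) * |sy - sx| / (sx * sy) := by
    calc ∑ U ∈ t, |a x U / sx - a y U / sy|
        ≤ ∑ U ∈ t, (|a x U - a y U| / sx + a y U * |sy - sx| / (sx * sy)) :=
          Finset.sum_le_sum fun U _ => key U
      _ = _ := by rw [Finset.sum_add_distrib, ← Finset.sum_div, ← Finset.sum_div,
            ← Finset.sum_mul]
  have step2 : (∑ U ∈ t, a y U) * |sy - sx| / (sx * sy) = |sy - sx| / sx := by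
    rw [← hsy_eq]
    field_simp
  have step3 : (∑ U ∈ t, |a x U - a y U|) / sx ≤ c * d / sx := by gcongr
  have step4 : |sy - sx| / sx ≤ c * d / sx := by gcongr
  have hk0 : (0 : ℝ) < k := by
    have : (1 : ℝ) ≤ k := by exact_mod_cast hk
    linarith
  have hN1 : (1 : ℝ) ≤ N := by exact_mod_cast hN
  calc ∑ U ∈ t, |a x U / sx - a y U / sy|
      ≤ (∑ U ∈ t, |a x U - a y U|) / sx + (∑ U ∈ t, a y U) * |sy - sx| / (sx * sy) := step1
    _ = (∑ U ∈ t, |a x U - a y U|) / sx + |sy - sx| / sx := by rw [step2]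
    _ ≤ c * d / sx + c * d / sx := add_le_add step3 step4
    _ = 2 * c * d / sx := by ring
    _ ≤ d / k := by
        rw [div_le_div_iff₀ hsx0 hk0]
        nlinarith [mul_nonneg hd0 hk0.le, mul_nonneg (mul_nonneg hd0 hk0.le) (sub_nonneg.mpr hc),
          mul_nonneg hd0 (sub_nonneg.mpr hsx4)]
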